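/- For every i with 1 ≤ i ≤ p−1, the number of key positions holding a key not smaller than the i·s-th smallest sample key is at least (p·s − i·s − p + 1)·x; that is, |{(k, q) ∈ Fin p × Fin (s·x) : K k q ≥ t_{i·s}}| ≥ (p·s − i·s − p + 1)·x. -/

import Mathlib

/-- Auxiliary: `a * c - 1 < b * c` style index bounds reduce to this. -/
private lemma idx_lt {a b : ℕ} (ha : 1 ≤ a) (hab : a ≤ b) : a - 1 < b := by omega

lemma card_filter_val_lt {n : ℕ} (v : ℕ) (h : v ≤ n) :
    (Finset.univ.filter fun q : Fin n => (q : ℕ) < v).card = v := by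
  have : (Finset.univ.filter fun q : Fin n => (q : ℕ) < v).card = (Finset.range v).card := by
    refine Finset.card_bij (fun q _ => (q : ℕ)) ?_ ?_ ?_
    · intro a ha; simp at ha ⊢; exact ha
    · intro a _ b _ hab; exact Fin.val_injective hab
    · intro b hb
      simp only [Finset.mem_range] at hb
      exact ⟨⟨b, lt_of_lt_of_le hb h⟩, by simp [hb], rfl⟩
  simpa using this

lemma lowerset_lt {n : ℕ} {α : Type*} [LinearOrder α] {f : Fin n → α} (hf : Monotone f)
    (T : α) {q : Fin n}
    (hq : (q : ℕ) < (Finset.univ.filter fun r => f r < T).card) : f q < T := by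
  by_contra h
  push_neg at h
  have hsub : (Finset.univ.filter fun r => f r < T) ⊆
      Finset.univ.filter fun r : Fin n => (r : ℕ) < (q : ℕ) := by
    intro r hr
    simp only [Finset.mem_filter, Finset.mem_univ, true_and] at hr ⊢
    by_contra hr2
    push_neg at hr2
    have : q ≤ r := by exact_mod_cast hr2
    exact absurd (lt_of_le_of_lt (h.trans (hf this)) hr) (lt_irrefl _)
  have := Finset.card_le_card hsub
  rw [card_filter_val_lt _ q.isLt.le] at this
  omega

lemma seg_lt {s x : ℕ} (hx : 0 < x) (j : Fin s) : ((j : ℕ) + 1) * x - 1 < s * x := by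
  have h : ((j : ℕ) + 1) * x ≤ s * x := Nat.mul_le_mul j.isLt (le_refl x)
  have h2 : 1 ≤ ((j : ℕ) + 1) * x := Nat.mul_pos (Nat.succ_pos _) hx
  omega

/-- per-row bound -/
lemma row_bound {s x : ℕ} (hx : 0 < x) {α : Type*} [LinearOrder α]
    {f : Fin (s * x) → α} (hf : Monotone f) (T : α) :
    (Finset.univ.filter fun q : Fin (s * x) => f q < T).card ≤
      (Finset.univ.filter fun j : Fin s =>
        f ⟨((j : ℕ) + 1) * x - 1, seg_lt hx j⟩ < T).card * x + (x - 1) := by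
  set m := (Finset.univ.filter fun q : Fin (s * x) => f q < T).card with hm
  set c := (Finset.univ.filter fun j : Fin s =>
        f ⟨((j : ℕ) + 1) * x - 1, seg_lt hx j⟩ < T).card with hc
  have hms : m ≤ s * x := by
    have := Finset.card_filter_le (Finset.univ : Finset (Fin (s*x))) (fun q => f q < T)
    simpa using this
  have hdiv : m / x ≤ c := by
    rw [hc, ← card_filter_val_lt (n := s) (m / x) (by
      calc m / x ≤ s * x / x := Nat.div_le_div_right hms
      _ = s := Nat.mul_div_cancel _ hx)]
    apply Finset.card_le_card
    intro j hj
    simp only [Finset.mem_filter, Finset.mem_univ, true_and] at hj ⊢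
    apply lowerset_lt hf
    have h1 : ((j:ℕ) + 1) * x ≤ (m / x) * x := Nat.mul_le_mul hj (le_refl x)
    have h2 : m / x * x ≤ m := Nat.div_mul_le_self m x
    have h3 : 1 ≤ ((j:ℕ) + 1) * x := Nat.mul_pos (Nat.succ_pos _) hx
    simp only
    omega
  have hlt : m / x < c + 1 := by omega
  have h4 := (Nat.div_lt_iff_lt_mul hx).mp hlt
  have h5 : (c + 1) * x = c * x + x := by ring
  omega

/-- In the regular oversampling setup, for every `i` with
`1 ≤ i ≤ p - 1`, at least `(p*s - i*s - p + 1) * x` key positions hold a key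
not smaller than the `i·s`-th smallest sample key. -/
theorem stmt_1
    (p s x : ℕ) (hp : 0 < p) (hs : 0 < s) (hx : 0 < x)
    (α : Type*) [LinearOrder α]
    (K : Fin p → Fin (s * x) → α)
    (hK : ∀ k : Fin p, Monotone (K k))
    (t : Fin (p * s) → α)
    (ht : Monotone t)
    (hsample :
      (↑(List.ofFn t) : Multiset α) =
        Multiset.map
          (fun kj : Fin p × Fin s =>
            K kj.1
              ⟨((kj.2 : ℕ) + 1) * x - 1,
                idx_lt (Nat.mul_pos (Nat.succ_pos _) hx)
                  (Nat.mul_le_mul kj.2.isLt (le_refl x))⟩)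
          Finset.univ.val) :
    ∀ i : ℕ, ∀ (hi1 : 1 ≤ i) (hi2 : i ≤ p - 1),
      ((p : ℤ) * s - i * s - p + 1) * x ≤
        ((Finset.univ.filter
          (fun kq : Fin p × Fin (s * x) =>
            t ⟨i * s - 1,
                idx_lt (Nat.mul_pos hi1 hs)
                  (Nat.mul_le_mul (le_trans hi2 (Nat.sub_le p 1)) (le_refl s))⟩ ≤
              K kq.1 kq.2)).card : ℤ) := by
  intro i hi1 hi2
  have his1 : 1 ≤ i * s := Nat.mul_pos hi1 hs
  have hisN : i * s - 1 < p * s :=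
    idx_lt his1 (Nat.mul_le_mul (le_trans hi2 (Nat.sub_le p 1)) (le_refl s))
  set T : α := t ⟨i * s - 1,
      idx_lt (Nat.mul_pos hi1 hs)
        (Nat.mul_le_mul (le_trans hi2 (Nat.sub_le p 1)) (le_refl s))⟩ with hTdef
  -- rewrite the sample multiset as a map over univ.val
  have hofn : (↑(List.ofFn t) : Multiset α) = Multiset.map t Finset.univ.val := by
    rw [List.ofFn_eq_map]; rfl
  -- count of samples below T
  have hcnt := congrArg (Multiset.countP (fun a => a < T)) (hofn ▸ hsample)
  rw [Multiset.countP_map, Multiset.countP_map] at hcnt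
  have hsampeq :
      (Finset.univ.filter fun j : Fin (p * s) => t j < T).card =
      (Finset.univ.filter fun kj : Fin p × Fin s =>
        K kj.1 ⟨((kj.2 : ℕ) + 1) * x - 1, seg_lt hx kj.2⟩ < T).card := hcnt
  have hsampbound :
      (Finset.univ.filter fun kj : Fin p × Fin s =>
        K kj.1 ⟨((kj.2 : ℕ) + 1) * x - 1, seg_lt hx kj.2⟩ < T).card ≤ i * s - 1 := by
    rw [← hsampeq, ← card_filter_val_lt (n := p * s) (i * s - 1) hisN.le]
    apply Finset.card_le_card
    intro j hj
    simp only [Finset.mem_filter, Finset.mem_univ, true_and] at hj ⊢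
    by_contra hj2
    push_neg at hj2
    have : (⟨i * s - 1, hisN⟩ : Fin (p * s)) ≤ j := hj2
    exact absurd (lt_of_le_of_lt (ht this) hj) (lt_irrefl _)
  -- decompose the count of positions below T rowwise
  have hprod :
      (Finset.univ.filter fun kq : Fin p × Fin (s * x) => K kq.1 kq.2 < T).card =
      ∑ k : Fin p, (Finset.univ.filter fun q : Fin (s * x) => K k q < T).card := by
    simp only [Finset.card_filter]
    rw [Fintype.sum_prod_type]
  have hprod2 :
      (Finset.univ.filter fun kj : Fin p × Fin s =>
        K kj.1 ⟨((kj.2 : ℕ) + 1) * x - 1, seg_lt hx kj.2⟩ < T).card =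
      ∑ k : Fin p, (Finset.univ.filter fun j : Fin s =>
        K k ⟨((j : ℕ) + 1) * x - 1, seg_lt hx j⟩ < T).card := by
    simp only [Finset.card_filter]
    rw [Fintype.sum_prod_type]
  have hLt :
      (Finset.univ.filter fun kq : Fin p × Fin (s * x) => K kq.1 kq.2 < T).card ≤
        (i * s - 1) * x + p * (x - 1) := by
    rw [hprod]
    calc ∑ k : Fin p, (Finset.univ.filter fun q : Fin (s * x) => K k q < T).card
        ≤ ∑ k : Fin p, ((Finset.univ.filter fun j : Fin s =>
            K k ⟨((j : ℕ) + 1) * x - 1, seg_lt hx j⟩ < T).card * x + (x - 1)) :=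
          Finset.sum_le_sum fun k _ => row_bound hx (hK k) T
      _ = (∑ k : Fin p, (Finset.univ.filter fun j : Fin s =>
            K k ⟨((j : ℕ) + 1) * x - 1, seg_lt hx j⟩ < T).card) * x + p * (x - 1) := by
          rw [Finset.sum_add_distrib, ← Finset.sum_mul]
          simp [mul_comm]
      _ ≤ (i * s - 1) * x + p * (x - 1) := by
          have := hprod2 ▸ hsampbound
          exact Nat.add_le_add_right (Nat.mul_le_mul this (le_refl x)) _
  -- complement count
  have hsplit :
      (Finset.univ.filter fun kq : Fin p × Fin (s * x) => T ≤ K kq.1 kq.2).card +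
      (Finset.univ.filter fun kq : Fin p × Fin (s * x) => K kq.1 kq.2 < T).card
        = p * (s * x) := by
    have := Finset.card_filter_add_card_filter_not
      (s := (Finset.univ : Finset (Fin p × Fin (s * x))))
      (p := fun kq => T ≤ K kq.1 kq.2)
    simpa [not_le] using this
  -- final arithmetic over ℤ
  have hcast1 : ((i * s - 1 : ℕ) : ℤ) = (i : ℤ) * s - 1 := by
    push_cast [Nat.cast_sub his1]; ring
  have hcast2 : ((x - 1 : ℕ) : ℤ) = (x : ℤ) - 1 := by
    push_cast [Nat.cast_sub hx]; ring
  have hLtZ : ((Finset.univ.filter fun kq : Fin p × Fin (s * x) =>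
      K kq.1 kq.2 < T).card : ℤ) ≤ ((i : ℤ) * s - 1) * x + p * ((x : ℤ) - 1) := by
    have := (Nat.cast_le (α := ℤ)).mpr hLt
    push_cast [hcast1, hcast2] at this
    linarith
  have hsplitZ : ((Finset.univ.filter fun kq : Fin p × Fin (s * x) =>
        T ≤ K kq.1 kq.2).card : ℤ) +
      ((Finset.univ.filter fun kq : Fin p × Fin (s * x) =>
        K kq.1 kq.2 < T).card : ℤ) = (p : ℤ) * (s * x) := by
    exact_mod_cast congrArg (Nat.cast : ℕ → ℤ) hsplit
  have hkey : ((p : ℤ) * s - i * s - p + 1) * x + (((i : ℤ) * s - 1) * x + p * ((x : ℤ) - 1))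
      = (p : ℤ) * (s * x) - p := by ring
  have hpZ : (0 : ℤ) ≤ p := Int.natCast_nonneg p
  linarith
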